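/- arXiv:2106.09860 — 2 statements merged into one kernel-verified Lean document; each statement's English description precedes it below -/
import Mathlib

section
/- Let K_{N;ℓ} = J_{N;ℓ} ∩ I_p. Then lim_{N→∞} |K_{N;ℓ}| / |J_{N;ℓ}| = 1 − 1/(p_1···p_d) for each fixed ℓ ≥ 1. -/
open Filter Finset

/-- Limit of `⌊n/q⌋ / n` as `n → ∞`. -/
lemma aux_floor_div_lim (q : ℕ) (hq : 0 < q) :
    Tendsto (fun n : ℕ => ((n / q : ℕ) : ℝ) / n) atTop (nhds (1 / q)) := by
  have hq' : (0:ℝ) < q := by exact_mod_cast hq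
  have h1 : Tendsto (fun n : ℕ => 1 / (q:ℝ) - 1 / n) atTop (nhds (1 / q)) := by
    have := tendsto_one_div_atTop_nhds_zero_nat (𝕜 := ℝ)
    simpa using tendsto_const_nhds.sub this
  refine tendsto_of_tendsto_of_tendsto_of_le_of_le' h1 tendsto_const_nhds ?_ ?_
  · filter_upwards [eventually_ge_atTop 1] with n hn
    have hn' : (0:ℝ) < n := by exact_mod_cast hn
    have key : (n:ℝ) < q * ((n / q : ℕ) + 1) := by
      exact_mod_cast Nat.lt_mul_div_succ n hq
    rw [div_sub_div _ _ (ne_of_gt hq') (ne_of_gt hn'), div_le_div_iff₀ (by positivity) hn']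
    nlinarith
  · filter_upwards [eventually_ge_atTop 1] with n hn
    have hn' : (0:ℝ) < n := by exact_mod_cast hn
    have key : ((n / q : ℕ) : ℝ) ≤ (n:ℝ) / q := Nat.cast_div_le
    rw [div_le_div_iff₀ hn' hq']
    calc ((n / q : ℕ) : ℝ) * q ≤ ((n:ℝ)/q) * q := by nlinarith
      _ = n := by field_simp
      _ ≤ 1 * n := by linarith

/-- Cardinality of a "box". -/
lemma aux_box_card {d : ℕ} (N m : Fin d → ℕ) (hm : ∀ k, 0 < m k) :
    Nat.card {i : Fin d → ℕ // (∀ k, 1 ≤ i k) ∧ ∀ k, i k * m k ≤ N k}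
      = ∏ k, N k / m k := by
  have e1 : {i : Fin d → ℕ // (∀ k, 1 ≤ i k) ∧ ∀ k, i k * m k ≤ N k}
      ≃ ∀ k, (Set.Icc 1 (N k / m k) : Set ℕ) :=
    (Equiv.subtypeEquivRight (fun i => by
        constructor
        · rintro ⟨h1, h2⟩ k
          exact ⟨h1 k, (Nat.le_div_iff_mul_le (hm k)).2 (h2 k)⟩
        · intro h
          exact ⟨fun k => (h k).1, fun k => (Nat.le_div_iff_mul_le (hm k)).1 (h k).2⟩)).trans
      (Equiv.subtypePiEquivPi)
  rw [Nat.card_congr e1, Nat.card_pi]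
  refine Finset.prod_congr rfl fun k _ => ?_
  rw [Nat.card_coe_set_eq, Set.ncard_eq_toFinset_card', Set.toFinset_Icc, Nat.card_Icc]
  exact Nat.succ_sub_one _

/-- With `K_{N;ℓ} = J_{N;ℓ} ∩ I_p`, for each fixed `ℓ ≥ 1`,
`|K_{N;ℓ}| / |J_{N;ℓ}| → 1 − 1/(p₁⋯p_d)` as all `N k → ∞`. -/
theorem stmt7 (d : ℕ) (hd : 0 < d) (p : Fin d → ℕ) (hp : ∀ k, 2 ≤ p k)
    (ℓ : ℕ) (hℓ : 1 ≤ ℓ) :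
    Tendsto (fun N : Fin d → ℕ =>
        (Nat.card {i : Fin d → ℕ //
            (∀ k, 1 ≤ i k) ∧ (∀ k, i k * p k ^ (ℓ - 1) ≤ N k) ∧
            (∃ k, N k < i k * p k ^ ℓ) ∧ (∃ j, ¬ p j ∣ i j)} : ℝ) /
          (Nat.card {i : Fin d → ℕ //
            (∀ k, 1 ≤ i k) ∧ (∀ k, i k * p k ^ (ℓ - 1) ≤ N k) ∧
            (∃ k, N k < i k * p k ^ ℓ)} : ℝ))
      atTop (nhds (1 - 1 / ∏ k, (p k : ℝ))) := by
  obtain ⟨L, rfl⟩ : ∃ L, ℓ = L + 1 := ⟨ℓ - 1, by omega⟩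
  -- basic sets
  set S : (Fin d → ℕ) → ℕ → Set (Fin d → ℕ) :=
    fun N t => {i | (∀ k, 1 ≤ i k) ∧ ∀ k, i k * p k ^ t ≤ N k} with hS
  have hSfin : ∀ N t, (S N t).Finite := by
    intro N t
    refine (Set.Finite.pi (fun k => Set.finite_Icc 1 (N k))).subset ?_
    rintro i ⟨h1, h2⟩
    refine Set.mem_pi.2 fun k _ => ⟨h1 k, ?_⟩
    calc i k ≤ i k * p k ^ t := Nat.le_mul_of_pos_right _ (Nat.pow_pos (n := t) (by have := hp k; omega))
      _ ≤ N k := h2 k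
  have hScard : ∀ N t, (S N t).ncard = ∏ k, N k / p k ^ t := by
    intro N t
    rw [← Nat.card_coe_set_eq]
    exact aux_box_card N (fun k => p k ^ t) (fun k => Nat.pow_pos (n := t) (by have := hp k; omega))
  have hSmono : ∀ N t, S N (t+1) ⊆ S N t := by
    rintro N t i ⟨h1, h2⟩
    refine ⟨h1, fun k => le_trans ?_ (h2 k)⟩
    exact Nat.mul_le_mul_left _ (Nat.pow_le_pow_right (by have := hp k; omega) (by omega))
  -- counts
  set A : (Fin d → ℕ) → ℕ := fun N => ∏ k, N k / p k ^ L with hA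
  set B : (Fin d → ℕ) → ℕ := fun N => ∏ k, N k / p k ^ (L+1) with hB
  set C : (Fin d → ℕ) → ℕ := fun N => ∏ k, N k / p k ^ (L+2) with hC
  -- J set
  have hJset : ∀ N, {i : Fin d → ℕ |
      (∀ k, 1 ≤ i k) ∧ (∀ k, i k * p k ^ (L+1-1) ≤ N k) ∧
      (∃ k, N k < i k * p k ^ (L+1))} = S N L \ S N (L+1) := by
    intro N
    ext i
    simp only [hS, Set.mem_setOf_eq, Set.mem_diff, Nat.add_sub_cancel]
    constructor
    · rintro ⟨h1, h2, k, hk⟩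
      exact ⟨⟨h1, h2⟩, fun ⟨_, h⟩ => absurd (h k) (by omega)⟩
    · rintro ⟨⟨h1, h2⟩, hn⟩
      refine ⟨h1, h2, ?_⟩
      by_contra hc
      push_neg at hc
      exact hn ⟨h1, fun k => hc k⟩
  have hJcard : ∀ N, Nat.card {i : Fin d → ℕ //
      (∀ k, 1 ≤ i k) ∧ (∀ k, i k * p k ^ (L+1-1) ≤ N k) ∧
      (∃ k, N k < i k * p k ^ (L+1))} = A N - B N := by
    intro N
    have h0 : Nat.card {i : Fin d → ℕ //
        (∀ k, 1 ≤ i k) ∧ (∀ k, i k * p k ^ (L+1-1) ≤ N k) ∧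
        (∃ k, N k < i k * p k ^ (L+1))} = ({i : Fin d → ℕ |
        (∀ k, 1 ≤ i k) ∧ (∀ k, i k * p k ^ (L+1-1) ≤ N k) ∧
        (∃ k, N k < i k * p k ^ (L+1))} : Set (Fin d → ℕ)).ncard :=
      Nat.card_coe_set_eq _
    rw [h0, hJset N, Set.ncard_diff (hSmono N L) ((hSfin N L).subset (hSmono N L)), hScard, hScard]
  -- divisible part
  set Dv : Set (Fin d → ℕ) := {i | ∀ j, p j ∣ i j} with hDv
  set sc : (Fin d → ℕ) → (Fin d → ℕ) := fun i k => p k * i k with hsc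
  have hscInj : Function.Injective sc := by
    intro a b hab
    funext k
    exact Nat.eq_of_mul_eq_mul_left (by have := hp k; omega) (congrFun hab k)
  have hDset : ∀ N, (S N L \ S N (L+1)) ∩ Dv = sc '' (S N (L+1) \ S N (L+2)) := by
    intro N
    ext i
    simp only [hS, hDv, hsc, Set.mem_inter_iff, Set.mem_diff, Set.mem_setOf_eq, Set.mem_image]
    constructor
    · rintro ⟨⟨⟨h1, h2⟩, h3⟩, hdiv⟩
      have key : ∀ k, i k = p k * (i k / p k) := fun k => (Nat.mul_div_cancel' (hdiv k)).symm
      have e : ∀ k t, (i k / p k) * p k ^ (t+1) = i k * p k ^ t := by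
        intro k t
        conv_rhs => rw [key k]
        rw [pow_succ]
        ring
      refine ⟨fun k => i k / p k, ⟨⟨fun k => ?_, fun k => ?_⟩, fun hmem => h3 ⟨fun k => ?_, fun k => ?_⟩⟩, ?_⟩
      · exact (Nat.one_le_div_iff (by have := hp k; omega)).2 (Nat.le_of_dvd (h1 k) (hdiv k))
      · rw [e k L]; exact h2 k
      · exact h1 k
      · have hx := hmem.2 k
        rw [e k (L+1)] at hx
        exact hx
      · funext k
        exact (key k).symm
    · rintro ⟨i', ⟨⟨h1, h2⟩, h3⟩, rfl⟩
      have e : ∀ k t, (p k * i' k) * p k ^ t = i' k * p k ^ (t+1) := by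
        intro k t
        rw [pow_succ]
        ring
      refine ⟨⟨⟨fun k => ?_, fun k => ?_⟩, fun hmem => h3 ⟨h1, fun k => ?_⟩⟩, fun j => ⟨i' j, rfl⟩⟩
      · have := hp k; have := h1 k; nlinarith
      · rw [e k L]; exact h2 k
      · have hx := hmem.2 k
        rw [e k (L+1)] at hx
        exact hx
  have hDcard : ∀ N, ((S N L \ S N (L+1)) ∩ Dv).ncard = B N - C N := by
    intro N
    rw [hDset N, Set.ncard_image_of_injective _ hscInj,
      Set.ncard_diff (hSmono N (L+1)) ((hSfin N (L+1)).subset (hSmono N (L+1))), hScard, hScard]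
  have hKcard : ∀ N, Nat.card {i : Fin d → ℕ //
      (∀ k, 1 ≤ i k) ∧ (∀ k, i k * p k ^ (L+1-1) ≤ N k) ∧
      (∃ k, N k < i k * p k ^ (L+1)) ∧ (∃ j, ¬ p j ∣ i j)} = (A N - B N) - (B N - C N) := by
    intro N
    have h0 : Nat.card {i : Fin d → ℕ //
        (∀ k, 1 ≤ i k) ∧ (∀ k, i k * p k ^ (L+1-1) ≤ N k) ∧
        (∃ k, N k < i k * p k ^ (L+1)) ∧ (∃ j, ¬ p j ∣ i j)} = ({i : Fin d → ℕ |
        (∀ k, 1 ≤ i k) ∧ (∀ k, i k * p k ^ (L+1-1) ≤ N k) ∧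
        (∃ k, N k < i k * p k ^ (L+1)) ∧ (∃ j, ¬ p j ∣ i j)} : Set (Fin d → ℕ)).ncard :=
      Nat.card_coe_set_eq _
    have h1 : ({i : Fin d → ℕ |
        (∀ k, 1 ≤ i k) ∧ (∀ k, i k * p k ^ (L+1-1) ≤ N k) ∧
        (∃ k, N k < i k * p k ^ (L+1)) ∧ (∃ j, ¬ p j ∣ i j)} : Set (Fin d → ℕ))
        = (S N L \ S N (L+1)) \ ((S N L \ S N (L+1)) ∩ Dv) := by
      rw [Set.diff_self_inter]
      ext i
      have hJ := Set.ext_iff.1 (hJset N) i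
      simp only [Set.mem_setOf_eq] at hJ ⊢
      simp only [Set.mem_diff, hDv, Set.mem_setOf_eq]
      constructor
      · rintro ⟨a, b, c, e⟩
        refine ⟨hJ.1 ⟨a, b, c⟩, ?_⟩
        intro hall
        obtain ⟨j, hj⟩ := e
        exact hj (hall j)
      · rintro ⟨hmem, hnd⟩
        obtain ⟨a, b, c⟩ := hJ.2 hmem
        refine ⟨a, b, c, ?_⟩
        by_contra hc
        push_neg at hc
        exact hnd hc
    rw [h0, h1,
      Set.ncard_diff Set.inter_subset_left ((hSfin N L).diff.inter_of_left Dv),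
      hDcard N,
      Set.ncard_diff (hSmono N L) ((hSfin N L).subset (hSmono N L)), hScard, hScard]
  -- inequalities between counts
  have hle : ∀ (N : Fin d → ℕ) t, (∏ k, N k / p k ^ (t+1)) ≤ ∏ k, N k / p k ^ t := by
    intro N t
    refine Finset.prod_le_prod' fun k _ => ?_
    exact Nat.div_le_div_left
      (Nat.pow_le_pow_right (by have := hp k; omega) (by omega))
      (Nat.pow_pos (n := t) (by have := hp k; omega))
  have hBA : ∀ N, B N ≤ A N := fun N => hle N L
  have hCB : ∀ N, C N ≤ B N := fun N => hle N (L+1)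
  have hDJ : ∀ N, B N - C N ≤ A N - B N := by
    intro N
    have h1 := Set.ncard_le_ncard (Set.inter_subset_left
      (s := S N L \ S N (L+1)) (t := Dv)) ((hSfin N L).diff)
    rw [hDcard N, Set.ncard_diff (hSmono N L) ((hSfin N L).subset (hSmono N L)),
      hScard, hScard] at h1
    exact h1
  -- analytic part
  have hev : ∀ k : Fin d, Tendsto (fun N : Fin d → ℕ => N k) atTop atTop :=
    fun k => tendsto_atTop_atTop.2 fun b => ⟨fun _ => b, fun N h => h k⟩
  set P : ℝ := ∏ k, (p k : ℝ) with hP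
  have hP1 : 1 < P := by
    rw [hP]
    have : Nonempty (Fin d) := Fin.pos_iff_nonempty.1 hd
    calc (1:ℝ) = ∏ _k : Fin d, 1 := by simp
      _ < ∏ k, (p k : ℝ) := by
        refine Finset.prod_lt_prod_of_nonempty (fun k _ => one_pos) (fun k _ => ?_)
          Finset.univ_nonempty
        exact_mod_cast Nat.lt_of_lt_of_le one_lt_two (hp k)
  have hP0 : (0:ℝ) < P := lt_trans one_pos hP1
  have hprodlim : ∀ t, Tendsto
      (fun N : Fin d → ℕ => (∏ k, ((N k / p k ^ t : ℕ):ℝ)) / ∏ k, ((N k : ℕ):ℝ))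
      atTop (nhds (1 / P ^ t)) := by
    intro t
    have hval : (∏ k, (1:ℝ) / (p k : ℝ) ^ t) = 1 / P ^ t := by
      rw [hP, ← Finset.prod_pow]
      rw [Finset.prod_div_distrib, Finset.prod_const_one]
    have := tendsto_finset_prod (f := fun (k : Fin d) (N : Fin d → ℕ) =>
        ((N k / p k ^ t : ℕ):ℝ) / (N k : ℝ)) (x := atTop)
        (a := fun k => 1 / (p k : ℝ) ^ t) Finset.univ (fun k _ => by
          have h := (aux_floor_div_lim (p k ^ t)
            (Nat.pow_pos (n := t) (by have := hp k; omega))).comp (hev k)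
          simpa [Nat.cast_pow, Function.comp_def] using h)
    rw [hval] at this
    refine this.congr fun N => ?_
    rw [← Finset.prod_div_distrib]
  have haN : Tendsto (fun N : Fin d → ℕ => (A N : ℝ) / ∏ k, (N k : ℝ))
      atTop (nhds (1 / P ^ L)) := by
    refine (hprodlim L).congr fun N => ?_
    rw [hA]
    push_cast
    rfl
  have hbN : Tendsto (fun N : Fin d → ℕ => (B N : ℝ) / ∏ k, (N k : ℝ))
      atTop (nhds (1 / P ^ (L+1))) := by
    refine (hprodlim (L+1)).congr fun N => ?_
    rw [hB]
    push_cast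
    rfl
  have hcN : Tendsto (fun N : Fin d → ℕ => (C N : ℝ) / ∏ k, (N k : ℝ))
      atTop (nhds (1 / P ^ (L+2))) := by
    refine (hprodlim (L+2)).congr fun N => ?_
    rw [hC]
    push_cast
    rfl
  have hdenne : 1 / P ^ L - 1 / P ^ (L+1) ≠ 0 := by
    have h1 : P ^ L < P ^ (L+1) := by
      have := pow_lt_pow_right₀ hP1 (Nat.lt_succ_self L)
      exact this
    have h2 : (0:ℝ) < P ^ L := pow_pos hP0 L
    have h3 : (0:ℝ) < P ^ (L+1) := pow_pos hP0 (L+1)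
    have : 1 / P ^ (L+1) < 1 / P ^ L := by
      apply one_div_lt_one_div_of_lt h2 h1
    intro h
    linarith
  have hnum : Tendsto (fun N : Fin d → ℕ =>
      ((A N : ℝ) / ∏ k, (N k : ℝ)) - 2 * ((B N : ℝ) / ∏ k, (N k : ℝ))
        + ((C N : ℝ) / ∏ k, (N k : ℝ)))
      atTop (nhds (1 / P ^ L - 2 * (1 / P ^ (L+1)) + 1 / P ^ (L+2))) :=
    (haN.sub ((hbN.const_mul 2))).add hcN
  have hden : Tendsto (fun N : Fin d → ℕ =>
      ((A N : ℝ) / ∏ k, (N k : ℝ)) - ((B N : ℝ) / ∏ k, (N k : ℝ)))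
      atTop (nhds (1 / P ^ L - 1 / P ^ (L+1))) := haN.sub hbN
  have hlim := hnum.div hden hdenne
  have hvalue : (1 / P ^ L - 2 * (1 / P ^ (L+1)) + 1 / P ^ (L+2)) /
      (1 / P ^ L - 1 / P ^ (L+1)) = 1 - 1 / P := by
    have hPne : P ≠ 0 := ne_of_gt hP0
    have hLne : P ^ L ≠ 0 := pow_ne_zero L hPne
    rw [div_eq_iff hdenne, pow_succ, pow_succ, pow_succ]
    field_simp
    ring
  rw [hvalue] at hlim
  refine hlim.congr' ?_
  rw [eventuallyEq_comm, Filter.EventuallyEq, eventually_atTop]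
  refine ⟨fun _ => 1, fun N hN => ?_⟩
  have hQ0 : (0:ℝ) < ∏ k, (N k : ℝ) := by
    refine Finset.prod_pos fun k _ => ?_
    have := hN k
    exact_mod_cast Nat.lt_of_lt_of_le Nat.zero_lt_one this
  have hQne := ne_of_gt hQ0
  rw [hKcard N, hJcard N]
  have hc1 : ((A N - B N - (B N - C N) : ℕ) : ℝ) = (A N : ℝ) - 2 * B N + C N := by
    push_cast [Nat.cast_sub (hDJ N), Nat.cast_sub (hBA N), Nat.cast_sub (hCB N)]
    ring
  have hc2 : ((A N - B N : ℕ) : ℝ) = (A N : ℝ) - B N := by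
    push_cast [Nat.cast_sub (hBA N)]
    ring
  set Q : ℝ := ∏ k, (N k : ℝ) with hQdef
  have hcancel : ∀ x y : ℝ, (x / Q) / (y / Q) = x / y := fun x y => by
    rw [div_div_div_comm, div_self hQne, div_one]
  simp only [Pi.div_apply]
  rw [hc1, hc2]
  have e1 : (A N : ℝ) / Q - 2 * ((B N : ℝ) / Q) + (C N : ℝ) / Q
      = ((A N : ℝ) - 2 * B N + C N) / Q := by ring
  have e2 : (A N : ℝ) / Q - (B N : ℝ) / Q = ((A N : ℝ) - B N) / Q := by ring
  rw [e1, e2, hcancel]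
end

section
/- Let d ≥ 1 and p_1,...,p_d ≥ 2 pairwise coprime, and let σ = (σ_i)_{i∈ℕ^d} be i.i.d. uniform on {−1,1}. For S_N^p(σ) = ∑_{i_1=1}^{N_1}···∑_{i_d=1}^{N_d} σ_i σ_{p·i} (where p·i = (p_1 i_1, ..., p_d i_d)), the free energy F_{1/2}(β) = lim_{N→∞} (1/(N_1···N_d)) log E[exp(β S_N^p)] exists and equals log((e^β + e^{−β})/2) = log cosh β. In particular it does not depend on d or p. -/
open Filter MeasureTheory ProbabilityTheory

section Aux

variable {Ω : Type*} [MeasurableSpace Ω] (μ : Measure Ω) [IsProbabilityMeasure μ]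

lemma aux_integrable_of_abs_le {f : Ω → ℝ} (hm : Measurable f) {C : ℝ}
    (h : ∀ ω, |f ω| ≤ C) : Integrable f μ :=
  (integrable_const C).mono' hm.aestronglyMeasurable
    (Filter.Eventually.of_forall fun ω => by simpa [Real.norm_eq_abs] using h ω)

lemma aux_int_sigma_zero {X : Ω → ℝ} (hm : Measurable X)
    (hv : ∀ ω, X ω = 1 ∨ X ω = -1) (hu : μ {ω | X ω = 1} = 1 / 2) :
    ∫ ω, X ω ∂μ = 0 := by
  set A : Set Ω := X ⁻¹' {1} with hAdef
  have hAm : MeasurableSet A := hm (measurableSet_singleton 1)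
  have hμA : μ A = 1 / 2 := hu
  have hμAc : μ Aᶜ = 1 / 2 := by
    rw [measure_compl hAm (measure_ne_top μ A), hμA, measure_univ]
    exact ENNReal.sub_half ENNReal.one_ne_top
  have hint : Integrable X μ := aux_integrable_of_abs_le μ hm (C := 1)
    (fun ω => by rcases hv ω with h | h <;> simp [h])
  have htr : ((1 : ENNReal) / 2).toReal = (1 : ℝ) / 2 := by simp
  have h1 : ∫ ω in A, X ω ∂μ = (1 : ℝ) / 2 := by
    rw [setIntegral_congr_fun hAm (g := fun _ => (1 : ℝ)) (fun ω hω => hω)]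
    rw [setIntegral_const, measureReal_def, hμA, htr, smul_eq_mul, mul_one]
  have h2 : ∫ ω in Aᶜ, X ω ∂μ = -((1 : ℝ) / 2) := by
    have heqon : ∀ ω ∈ Aᶜ, X ω = (fun _ => (-1 : ℝ)) ω := by
      intro ω hω
      rcases hv ω with h | h
      · exact absurd h hω
      · exact h
    rw [setIntegral_congr_fun hAm.compl heqon, setIntegral_const, measureReal_def, hμAc, htr, smul_eq_mul]
    ring
  rw [← integral_add_compl hAm hint, h1, h2]
  ring

lemma aux_exp_pm {β t : ℝ} (ht : t = 1 ∨ t = -1) :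
    Real.exp (β * t) = Real.cosh β + t * Real.sinh β := by
  rcases ht with h | h <;> subst h
  · rw [mul_one, one_mul, Real.cosh_add_sinh]
  · rw [mul_neg_one, neg_one_mul, ← sub_eq_add_neg, Real.cosh_sub_sinh]

lemma key_lemma {Ω : Type*} [MeasurableSpace Ω] (μ : Measure Ω)
    [IsProbabilityMeasure μ]
    (d : ℕ) (hd : 0 < d) (p : Fin d → ℕ) (hp : ∀ k, 2 ≤ p k)
    (σ : (Fin d → ℕ) → Ω → ℝ)
    (hmeas : ∀ i, Measurable (σ i))
    (hindep : iIndepFun σ μ)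
    (hvals : ∀ i, ∀ ω, σ i ω = 1 ∨ σ i ω = -1)
    (hunif : ∀ i, μ {ω | σ i ω = 1} = 1 / 2)
    (β : ℝ)
    (E : Finset (Fin d → ℕ)) (hE1 : ∀ j ∈ E, ∀ k, 1 ≤ j k) :
    ∫ ω, Real.exp (β * ∑ j ∈ E, σ j ω * σ (fun k => p k * j k) ω) ∂μ
      = Real.cosh β ^ E.card := by
  classical
  -- basic facts
  have habs : ∀ j ω, |σ j ω| ≤ 1 := fun j ω => by
    rcases hvals j ω with h | h <;> simp [h]
  have hterm_abs : ∀ j ω, |σ j ω * σ (fun k => p k * j k) ω| ≤ 1 := fun j ω => by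
    rw [abs_mul]
    exact mul_le_one₀ (habs _ _) (abs_nonneg _) (habs _ _)
  have hFnmeas : ∀ t : Finset (Fin d → ℕ),
      Measurable (fun ω => Real.exp (β * ∑ j ∈ t, σ j ω * σ (fun k => p k * j k) ω)) := by
    intro t
    exact (Measurable.const_mul
      (Finset.measurable_sum t fun j _ => (hmeas j).mul (hmeas _)) β).exp
  have hFnbound : ∀ (t : Finset (Fin d → ℕ)) ω,
      |Real.exp (β * ∑ j ∈ t, σ j ω * σ (fun k => p k * j k) ω)|
        ≤ Real.exp (|β| * t.card) := by
    intro t ω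
    rw [abs_of_pos (Real.exp_pos _)]
    apply Real.exp_le_exp.2
    calc β * ∑ j ∈ t, σ j ω * σ (fun k => p k * j k) ω
        ≤ |β * ∑ j ∈ t, σ j ω * σ (fun k => p k * j k) ω| := le_abs_self _
      _ = |β| * |∑ j ∈ t, σ j ω * σ (fun k => p k * j k) ω| := abs_mul _ _
      _ ≤ |β| * t.card := by
          apply mul_le_mul_of_nonneg_left _ (abs_nonneg β)
          calc |∑ j ∈ t, σ j ω * σ (fun k => p k * j k) ω|
              ≤ ∑ j ∈ t, |σ j ω * σ (fun k => p k * j k) ω| :=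
                Finset.abs_sum_le_sum_abs _ _
            _ ≤ ∑ _j ∈ t, (1 : ℝ) := Finset.sum_le_sum fun j _ => hterm_abs j ω
            _ = t.card := by simp
  have hFnint : ∀ t : Finset (Fin d → ℕ),
      Integrable (fun ω => Real.exp (β * ∑ j ∈ t, σ j ω * σ (fun k => p k * j k) ω)) μ :=
    fun t => aux_integrable_of_abs_le μ (hFnmeas t) (hFnbound t)
  -- strong induction
  induction E using Finset.strongInduction with
  | _ E ih => ?_
  rcases E.eq_empty_or_nonempty with rfl | hne
  · simp
  obtain ⟨i, hiE, hmax⟩ := E.exists_max_image (fun j => ∏ k, j k) hne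
  set v : Fin d → ℕ := fun k => p k * i k with hvdef
  have hpprod : 2 ≤ ∏ k, p k := by
    have k0 : Fin d := ⟨0, hd⟩
    exact le_trans (hp k0) (Finset.single_le_prod' (fun k _ => le_trans one_le_two (hp k)) (Finset.mem_univ k0))
  have hwpos : ∀ j ∈ E, 1 ≤ ∏ k, j k := fun j hj =>
    Finset.one_le_prod' fun k _ => hE1 j hj k
  have hvE : v ∉ E := by
    intro hv
    have h1 := hmax v hv
    have h2 : ∏ k, v k = (∏ k, p k) * ∏ k, i k := by
      rw [hvdef]; exact Finset.prod_mul_distrib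
    have h3 := hwpos i hiE
    nlinarith [h1, h2, h3, hpprod]
  have hvnei : ∀ j ∈ E.erase i, (fun k => p k * j k) ≠ v := by
    intro j hj heq
    have : j = i := by
      funext k
      have := congrFun heq k
      exact Nat.eq_of_mul_eq_mul_left (by have := hp k; omega) this
    exact (Finset.mem_erase.1 hj).1 this
  -- vertex set
  set S : Finset (Fin d → ℕ) :=
    insert i (E.erase i ∪ (E.erase i).image (fun j k => p k * j k)) with hSdef
  have hiS : i ∈ S := Finset.mem_insert_self _ _
  have hS1 : ∀ j ∈ E.erase i, j ∈ S := fun j hj =>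
    Finset.mem_insert_of_mem (Finset.mem_union_left _ hj)
  have hS2 : ∀ j ∈ E.erase i, (fun k => p k * j k) ∈ S := fun j hj =>
    Finset.mem_insert_of_mem (Finset.mem_union_right _ (Finset.mem_image_of_mem _ hj))
  have hvS : v ∉ S := by
    intro hv
    rcases Finset.mem_insert.1 hv with h | h
    · exact hvE (h ▸ hiE)
    rcases Finset.mem_union.1 h with h | h
    · exact hvE (Finset.mem_of_mem_erase h)
    · obtain ⟨j, hj, hjeq⟩ := Finset.mem_image.1 h
      exact hvnei j hj hjeq
  -- notation
  set G : Ω → ℝ :=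
    fun ω => Real.exp (β * ∑ j ∈ E.erase i, σ j ω * σ (fun k => p k * j k) ω) with hGdef
  set H : Ω → ℝ := fun ω => G ω * σ i ω with hHdef
  have hGmeas : Measurable G := hFnmeas _
  have hGint : Integrable G μ := hFnint _
  have hHmeas : Measurable H := hGmeas.mul (hmeas i)
  have hHbound : ∀ ω, |H ω| ≤ Real.exp (|β| * (E.erase i).card) := fun ω => by
    rw [hHdef, abs_mul]
    calc |G ω| * |σ i ω| ≤ |G ω| * 1 :=
          mul_le_mul_of_nonneg_left (habs i ω) (abs_nonneg _)
      _ = |G ω| := mul_one _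
      _ ≤ _ := hFnbound _ ω
  have hHint : Integrable H μ := aux_integrable_of_abs_le μ hHmeas hHbound
  have hHvmeas : Measurable (fun ω => H ω * σ v ω) := hHmeas.mul (hmeas v)
  have hHvint : Integrable (fun ω => H ω * σ v ω) μ :=
    aux_integrable_of_abs_le μ hHvmeas (fun ω => by
      rw [abs_mul]
      calc |H ω| * |σ v ω| ≤ |H ω| * 1 :=
            mul_le_mul_of_nonneg_left (habs v ω) (abs_nonneg _)
        _ = |H ω| := mul_one _
        _ ≤ _ := hHbound ω)
  -- pointwise identity
  have hpt : ∀ ω, Real.exp (β * ∑ j ∈ E, σ j ω * σ (fun k => p k * j k) ω)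
      = Real.cosh β * G ω + Real.sinh β * (H ω * σ v ω) := by
    intro ω
    have hsplit : ∑ j ∈ E, σ j ω * σ (fun k => p k * j k) ω
        = (∑ j ∈ E.erase i, σ j ω * σ (fun k => p k * j k) ω) + σ i ω * σ v ω :=
      (Finset.sum_erase_add E _ hiE).symm
    have hpm : σ i ω * σ v ω = 1 ∨ σ i ω * σ v ω = -1 := by
      rcases hvals i ω with h1 | h1 <;> rcases hvals v ω with h2 | h2 <;>
        simp [h1, h2]
    rw [hsplit, mul_add, Real.exp_add, aux_exp_pm hpm]
    rw [hGdef, hHdef]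
    ring
  -- independence of H and σ v
  have hIF : IndepFun H (σ v) μ := by
    have hdisj : Disjoint S ({v} : Finset (Fin d → ℕ)) :=
      Finset.disjoint_singleton_right.2 hvS
    have hbase := hindep.indepFun_finset S {v} hdisj hmeas
    set φ : (S → ℝ) → ℝ := fun x =>
      Real.exp (β * ∑ j ∈ (E.erase i).attach,
        x ⟨j.1, hS1 j.1 j.2⟩ * x ⟨(fun k => p k * j.1 k), hS2 j.1 j.2⟩) * x ⟨i, hiS⟩
      with hφdef
    set ψ : (({v} : Finset (Fin d → ℕ)) → ℝ) → ℝ :=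
      fun x => x ⟨v, Finset.mem_singleton_self v⟩ with hψdef
    have hφm : Measurable φ := by
      apply Measurable.mul _ (measurable_pi_apply _)
      apply Measurable.exp
      apply Measurable.const_mul
      exact Finset.measurable_sum _ fun j _ =>
        (measurable_pi_apply _).mul (measurable_pi_apply _)
    have hψm : Measurable ψ := measurable_pi_apply _
    have := hbase.comp hφm hψm
    have heq1 : (φ ∘ fun ω (w : S) => σ w ω) = H := by
      funext ω
      simp only [Function.comp_apply, hφdef, hHdef, hGdef]
      rw [Finset.sum_attach (E.erase i) (fun j => σ j ω * σ (fun k => p k * j k) ω)]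
    have heq2 : (ψ ∘ fun ω (w : ({v} : Finset (Fin d → ℕ))) => σ w ω) = σ v := by
      funext ω; rfl
    rwa [heq1, heq2] at this
  have hintzero : ∫ ω, σ v ω ∂μ = 0 :=
    aux_int_sigma_zero μ (hmeas v) (hvals v) (hunif v)
  have hmul : ∫ ω, H ω * σ v ω ∂μ = (∫ ω, H ω ∂μ) * ∫ ω, σ v ω ∂μ :=
    hIF.integral_fun_mul_eq_mul_integral hHint.aestronglyMeasurable
      (aux_integrable_of_abs_le μ (hmeas v) (fun ω => habs v ω)).aestronglyMeasurable
  -- put it together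
  have hih : ∫ ω, G ω ∂μ = Real.cosh β ^ (E.erase i).card :=
    ih (E.erase i) (Finset.erase_ssubset hiE)
      (fun j hj => hE1 j (Finset.mem_of_mem_erase hj))
  calc ∫ ω, Real.exp (β * ∑ j ∈ E, σ j ω * σ (fun k => p k * j k) ω) ∂μ
      = ∫ ω, (Real.cosh β * G ω + Real.sinh β * (H ω * σ v ω)) ∂μ := by
        exact integral_congr_ae (Filter.Eventually.of_forall hpt)
    _ = Real.cosh β * ∫ ω, G ω ∂μ + Real.sinh β * ∫ ω, H ω * σ v ω ∂μ := by
        rw [integral_add (hGint.const_mul _) (hHvint.const_mul _),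
          integral_const_mul, integral_const_mul]
    _ = Real.cosh β * Real.cosh β ^ (E.erase i).card := by
        rw [hih, hmul, hintzero, mul_zero, mul_zero, add_zero]
    _ = Real.cosh β ^ E.card := by
        rw [← pow_succ', Finset.card_erase_add_one hiE]

end Aux

/-- Let `p₁,…,p_d ≥ 2` be pairwise coprime and `(σ_i)_{i ∈ ℕ^d}` be i.i.d.
uniform on `{−1,1}`.  For the multiple sum
`S_N^p(σ) = ∑_{i ∈ [1,N₁]×⋯×[1,N_d]} σ_i σ_{p·i}` (with `p·i = (p₁i₁,…,p_d i_d)`),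
the free energy `F_{1/2}(β) = lim_N log E[exp(β S_N^p)]/(N₁⋯N_d)` exists and
equals `log((e^β + e^{−β})/2) = log cosh β`; in particular it is independent of
`d` and `p`. -/
theorem stmt14 {Ω : Type*} [MeasurableSpace Ω] (μ : Measure Ω)
    [IsProbabilityMeasure μ]
    (d : ℕ) (hd : 0 < d) (p : Fin d → ℕ) (hp : ∀ k, 2 ≤ p k)
    (hcop : ∀ i j, i ≠ j → Nat.Coprime (p i) (p j))
    (σ : (Fin d → ℕ) → Ω → ℝ)
    (hmeas : ∀ i, Measurable (σ i))
    (hindep : iIndepFun σ μ)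
    (hvals : ∀ i, ∀ ω, σ i ω = 1 ∨ σ i ω = -1)
    (hunif : ∀ i, μ {ω | σ i ω = 1} = 1 / 2)
    (β : ℝ) :
    Tendsto (fun N : Fin d → ℕ =>
        Real.log (∫ ω, Real.exp (β *
            ∑ i ∈ Finset.Icc (1 : Fin d → ℕ) N,
              σ i ω * σ (fun k => p k * i k) ω) ∂μ) /
          ∏ k, (N k : ℝ))
      atTop (nhds (Real.log ((Real.exp β + Real.exp (-β)) / 2))) := by
  have hconst : (fun N : Fin d → ℕ =>
        Real.log (∫ ω, Real.exp (β *
            ∑ i ∈ Finset.Icc (1 : Fin d → ℕ) N,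
              σ i ω * σ (fun k => p k * i k) ω) ∂μ) /
          ∏ k, (N k : ℝ))
      =ᶠ[atTop] (fun _ => Real.log ((Real.exp β + Real.exp (-β)) / 2)) := by
    filter_upwards [eventually_ge_atTop (1 : Fin d → ℕ)] with N hN
    have hmem : ∀ j ∈ Finset.Icc (1 : Fin d → ℕ) N, ∀ k, 1 ≤ j k := by
      intro j hj k
      exact (Finset.mem_Icc.1 hj).1 k
    rw [key_lemma μ d hd p hp σ hmeas hindep hvals hunif β _ hmem]
    have hcard : (Finset.Icc (1 : Fin d → ℕ) N).card = ∏ k, N k := by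
      rw [Pi.card_Icc]
      simp [Nat.card_Icc]
    rw [hcard, Real.log_pow]
    have hN0 : (∏ k, (N k : ℝ)) ≠ 0 := by
      apply ne_of_gt
      apply Finset.prod_pos
      intro k _
      have := hN k
      simp only [Pi.one_apply] at this
      exact_mod_cast Nat.lt_of_lt_of_le Nat.zero_lt_one this
    rw [show ((∏ k, N k : ℕ) : ℝ) = ∏ k, (N k : ℝ) from Nat.cast_prod _ _,
      mul_comm, mul_div_assoc, div_self hN0, mul_one, Real.cosh_eq]
  exact Tendsto.congr' hconst.symm tendsto_const_nhds
end
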